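/- Khintchine's Transference Principle, upper bound: for any point Θ = (θ_1,…,θ_n) ∈ R^n with 1, θ_1, …, θ_n linearly independent over Q, one has ω_0(Θ) ≤ (ω_{n−1}(Θ) − n + 1)/n (with ω_0(Θ) unrestricted when ω_{n−1}(Θ) = +∞). -/

import Mathlib

/-- Integer vectors with all coordinates bounded form a finite set. -/
lemma intVec_bounded_finite (m : ℕ) (R : ℝ) :
    {x : Fin m → ℤ | ∀ i, |(x i : ℝ)| ≤ R}.Finite := by
  apply Set.Finite.subset (Set.Finite.pi (t := fun _ : Fin m => Set.Icc (⌈-R⌉) (⌊R⌋))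
    (fun i => Set.finite_Icc _ _))
  intro x hx
  intro i _
  have h := hx i
  have h1 : -R ≤ (x i : ℝ) := by have := abs_le.mp h; linarith [this.1]
  have h2 : (x i : ℝ) ≤ R := (abs_le.mp h).2
  constructor
  · exact Int.ceil_le.mpr h1
  · exact Int.le_floor.mpr h2

lemma exists_large_of_infinite {m : ℕ} {S : Set (Fin m → ℤ)} (hS : S.Infinite) (R : ℝ) :
    ∃ x ∈ S, R < ‖fun i => (x i : ℝ)‖ := by
  by_contra h
  push_neg at h
  apply hS
  apply Set.Finite.subset (intVec_bounded_finite m R)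
  intro x hx i
  calc |(x i : ℝ)| = ‖(x i : ℝ)‖ := (Real.norm_eq_abs _).symm
    _ ≤ ‖fun j => (x j : ℝ)‖ := norm_le_pi_norm (fun j => (x j : ℝ)) i
    _ ≤ R := h x hx

lemma one_le_norm_intVec {m : ℕ} {x : Fin m → ℤ} (hx : x ≠ 0) :
    1 ≤ ‖fun i => (x i : ℝ)‖ := by
  obtain ⟨i, hi⟩ := Function.ne_iff.mp hx
  calc (1 : ℝ) ≤ |(x i : ℝ)| := by
        rw [← Int.cast_abs]
        exact_mod_cast Int.one_le_abs hi
    _ = ‖(x i : ℝ)‖ := (Real.norm_eq_abs _).symm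
    _ ≤ _ := norm_le_pi_norm (fun j => (x j : ℝ)) i

lemma linform_ne_zero {n : ℕ} {θ : Fin n → ℝ}
    (hθ : LinearIndependent ℚ (Fin.cons (1 : ℝ) θ : Fin (n + 1) → ℝ))
    {y : Fin (n + 1) → ℤ} (hy : y ≠ 0) :
    (y 0 : ℝ) + ∑ i : Fin n, (y i.succ : ℝ) * θ i ≠ 0 := by
  intro h0
  apply hy
  have key := Fintype.linearIndependent_iff.mp hθ (fun j => (y j : ℚ))
  have hsum : ∑ j : Fin (n + 1), ((y j : ℚ)) • (Fin.cons (1 : ℝ) θ : Fin (n + 1) → ℝ) j = 0 := by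
    rw [Fin.sum_univ_succ]
    simp only [Fin.cons_zero, Fin.cons_succ]
    have : ∀ j : Fin (n+1), ∀ v : ℝ, ((y j : ℚ)) • v = (y j : ℝ) * v := by
      intro j v
      rw [Rat.smul_def]
      push_cast
      ring
    rw [this 0 1]
    rw [Finset.sum_congr rfl (fun i _ => this i.succ (θ i))]
    rw [mul_one]
    exact h0
  have := key hsum
  funext j
  exact_mod_cast this j

lemma siegel_aux (n : ℕ) (hn : 1 ≤ n) (x : Fin (n + 1) → ℤ) (X : ℝ) (hX : 1 ≤ X)
    (hx : ∀ i, |(x i : ℝ)| ≤ X) (B : ℕ) (hB : 6 * (n + 1) * X ≤ (B : ℝ) ^ n) :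
    ∃ y : Fin (n + 1) → ℤ, y ≠ 0 ∧ (∑ i, x i * y i = 0) ∧ ∀ i, |(y i : ℝ)| ≤ B := by
  have hnR : (1 : ℝ) ≤ (n : ℝ) := by exact_mod_cast hn
  have hn1 : (2 : ℝ) ≤ (n : ℝ) + 1 := by linarith
  have hB1 : 1 ≤ B := by
    by_contra h
    push_neg at h
    interval_cases B
    have h0 : (0:ℝ) ^ n = 0 := zero_pow (by omega)
    rw [Nat.cast_zero, h0] at hB
    nlinarith
  have hBR : (1 : ℝ) ≤ (B : ℝ) := by exact_mod_cast hB1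
  set K : ℤ := (n + 1) * ⌈X⌉ * B with hK
  have hceil : (X : ℝ) ≤ (⌈X⌉ : ℝ) := Int.le_ceil X
  have hceil0 : (0 : ℤ) ≤ ⌈X⌉ := by
    have : (0:ℝ) ≤ (⌈X⌉:ℝ) := by linarith
    exact_mod_cast this
  have hceil2 : ((⌈X⌉ : ℤ) : ℝ) ≤ 2 * X := by
    calc ((⌈X⌉ : ℤ) : ℝ) ≤ X + 1 := le_of_lt (Int.ceil_lt_add_one X)
      _ ≤ 2 * X := by linarith
  set s : Finset (Fin (n + 1) → ℤ) :=
    Fintype.piFinset (fun _ : Fin (n + 1) => Finset.Icc (0 : ℤ) B) with hs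
  set t : Finset ℤ := Finset.Icc (-K) K with ht
  have hscard : s.card = (B + 1) ^ (n + 1) := by
    rw [hs, Fintype.card_piFinset]
    simp [Int.card_Icc]
  have hKpos : 0 ≤ K := by
    rw [hK]
    exact mul_nonneg (mul_nonneg (by positivity) hceil0) (by positivity)
  have htcardZ : (t.card : ℤ) = 2 * K + 1 := by
    rw [ht, Int.card_Icc]
    omega
  have htcard : (t.card : ℝ) = 2 * (K : ℝ) + 1 := by exact_mod_cast htcardZ
  have hcard : t.card < s.card := by
    have h1 : (t.card : ℝ) < (s.card : ℝ) := by
      rw [htcard, hscard]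
      push_cast
      have hKle : (K : ℝ) ≤ 2 * ((n : ℝ) + 1) * X * B := by
        rw [hK]
        push_cast
        have hp := mul_le_mul_of_nonneg_right
          (mul_le_mul_of_nonneg_left hceil2 (by linarith : (0:ℝ) ≤ (n:ℝ)+1))
          (by positivity : (0:ℝ) ≤ (B:ℝ))
        have he : ((n:ℝ)+1) * (2*X) * (B:ℝ) = 2 * ((n:ℝ)+1) * X * (B:ℝ) := by ring
        linarith
      have hBn1 : ((B:ℝ)) ^ (n+1) + 1 ≤ ((B:ℝ) + 1) ^ (n+1) := by
        have hN : B ^ (n+1) + 1 ≤ (B+1) ^ (n+1) :=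
          Nat.succ_le_of_lt (Nat.pow_lt_pow_left (by omega) (by omega))
        exact_mod_cast hN
      have h4 : 6 * ((n : ℝ) + 1) * X * B ≤ (B : ℝ) ^ (n + 1) := by
        have := mul_le_mul_of_nonneg_right hB (by positivity : (0:ℝ) ≤ (B:ℝ))
        rw [pow_succ]
        push_cast at this ⊢
        linarith
      have hA : (2:ℝ) ≤ ((n:ℝ)+1) * X := by nlinarith
      have hM : (2:ℝ) ≤ ((n:ℝ)+1) * X * (B:ℝ) := by nlinarith
      nlinarith
    exact_mod_cast h1
  have hmaps : ∀ y ∈ s, (∑ i, x i * y i) ∈ t := by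
    intro y hy
    rw [ht, Finset.mem_Icc]
    have hb : ∀ i, |x i * y i| ≤ ⌈X⌉ * B := by
      intro i
      rw [abs_mul]
      have h1 : |x i| ≤ ⌈X⌉ := by
        have h1' : |((x i : ℤ) : ℝ)| ≤ (⌈X⌉ : ℝ) := le_trans (hx i) hceil
        exact_mod_cast h1'
      have hmem := (Fintype.mem_piFinset.mp hy) i
      rw [Finset.mem_Icc] at hmem
      have h2 : |y i| ≤ (B : ℤ) := by
        rw [abs_of_nonneg hmem.1]; exact hmem.2
      exact mul_le_mul h1 h2 (abs_nonneg _) hceil0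
    have habs : |∑ i, x i * y i| ≤ K := by
      calc |∑ i, x i * y i| ≤ ∑ i, |x i * y i| := Finset.abs_sum_le_sum_abs _ _
        _ ≤ ∑ _i : Fin (n+1), (⌈X⌉ * B : ℤ) := Finset.sum_le_sum (fun i _ => hb i)
        _ = (n + 1) * (⌈X⌉ * B) := by
            rw [Finset.sum_const]
            simp [mul_comm]
        _ = K := by rw [hK]; ring
    exact abs_le.mp habs
  obtain ⟨y₁, hy₁, y₂, hy₂, hne, heq⟩ :=
    Finset.exists_ne_map_eq_of_card_lt_of_maps_to hcard hmaps
  refine ⟨y₁ - y₂, sub_ne_zero.mpr hne, ?_, ?_⟩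
  · have hsplit : ∑ i, x i * (y₁ i - y₂ i) = (∑ i, x i * y₁ i) - ∑ i, x i * y₂ i := by
      rw [← Finset.sum_sub_distrib]
      congr 1; funext i; ring
    simp only [Pi.sub_apply]
    rw [hsplit, heq, sub_self]
  · intro i
    have h1 := (Fintype.mem_piFinset.mp hy₁) i
    have h2 := (Fintype.mem_piFinset.mp hy₂) i
    rw [Finset.mem_Icc] at h1 h2
    simp only [Pi.sub_apply]
    have hZ : |y₁ i - y₂ i| ≤ (B : ℤ) := abs_le.mpr ⟨by omega, by omega⟩
    exact_mod_cast hZ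

lemma infinite_of_small {m : ℕ} (L : (Fin m → ℤ) → ℝ) (T : Set (Fin m → ℤ))
    (h : ∀ ε > (0:ℝ), ∃ y ∈ T, 0 < |L y| ∧ |L y| < ε) : T.Infinite := by
  classical
  by_contra h'
  rw [Set.not_infinite] at h'
  set F := h'.toFinset.filter (fun y => 0 < |L y|) with hF
  have hFne : F.Nonempty := by
    obtain ⟨y, hyT, hy0, _⟩ := h 1 one_pos
    exact ⟨y, by rw [hF, Finset.mem_filter, Set.Finite.mem_toFinset]; exact ⟨hyT, hy0⟩⟩
  obtain ⟨y₀, hy₀F, hmin⟩ := Finset.exists_min_image F (fun y => |L y|) hFne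
  have hy₀pos : 0 < |L y₀| := (Finset.mem_filter.mp hy₀F).2
  obtain ⟨y, hyT, hy0, hylt⟩ := h |L y₀| hy₀pos
  have hyF : y ∈ F := by rw [hF, Finset.mem_filter, Set.Finite.mem_toFinset]; exact ⟨hyT, hy0⟩
  have := hmin y hyF
  linarith

lemma zero_mem_sim {n : ℕ} (θ : Fin n → ℝ) :
    {x : Fin (n + 1) → ℤ |
      ‖fun i : Fin n => (x 0 : ℝ) * θ i - (x i.succ : ℝ)‖ ≤
        ‖fun i : Fin (n + 1) => (x i : ℝ)‖ ^ (-(0:ℝ))}.Infinite := by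
  apply Set.infinite_of_injective_forall_mem
    (f := fun k : ℤ => (Fin.cons k (fun i => round ((k : ℝ) * θ i)) : Fin (n+1) → ℤ))
  case hi =>
    intro a b hab
    have := congrFun hab 0
    simpa using this
  case hf =>
    intro k
    simp only [Set.mem_setOf_eq, neg_zero, Real.rpow_zero]
    apply pi_norm_le_iff_of_nonneg zero_le_one |>.mpr
    intro i
    simp only [Fin.cons_zero, Fin.cons_succ, Real.norm_eq_abs]
    calc |(k : ℝ) * θ i - (round ((k:ℝ) * θ i) : ℤ)| ≤ 1/2 := abs_sub_round _
      _ ≤ 1 := by norm_num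

lemma zero_mem_lin {n : ℕ} (hn : 1 ≤ n) (θ : Fin n → ℝ) :
    {x : Fin (n + 1) → ℤ |
      |(x 0 : ℝ) + ∑ i : Fin n, (x i.succ : ℝ) * θ i| ≤
        ‖fun i : Fin (n + 1) => (x i : ℝ)‖ ^ (-(0:ℝ))}.Infinite := by
  classical
  set i₀ : Fin n := ⟨0, hn⟩ with hi₀
  apply Set.infinite_of_injective_forall_mem
    (f := fun k : ℤ => (Fin.cons (-round ((k : ℝ) * θ i₀))
      (fun i => if i = i₀ then k else 0) : Fin (n+1) → ℤ))
  case hi =>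
    intro a b hab
    have := congrFun hab i₀.succ
    simpa using this
  case hf =>
    intro k
    simp only [Set.mem_setOf_eq, neg_zero, Real.rpow_zero]
    have hsum : ∑ i : Fin n, (((if i = i₀ then k else 0) : ℤ) : ℝ) * θ i = (k:ℝ) * θ i₀ := by
      rw [Finset.sum_eq_single i₀]
      · simp
      · intro b _ hb; simp [hb]
      · intro hb; exact absurd (Finset.mem_univ i₀) hb
    simp only [Fin.cons_zero, Fin.cons_succ]
    rw [hsum]
    push_cast
    rw [neg_add_eq_sub]
    calc |(k:ℝ) * θ i₀ - (round ((k:ℝ) * θ i₀) : ℤ)| ≤ 1/2 := abs_sub_round _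
      _ ≤ 1 := by norm_num

set_option maxHeartbeats 1600000 in
lemma transfer_step (n : ℕ) (hn : 1 ≤ n) (θ : Fin n → ℝ)
    (hθ : LinearIndependent ℚ (Fin.cons (1 : ℝ) θ : Fin (n + 1) → ℝ))
    (ω ω'' : ℝ) (hω : 0 ≤ ω) (hω''0 : 0 < ω'') (hω'' : ω'' < n * ω + n - 1)
    (hS : {x : Fin (n + 1) → ℤ |
      ‖fun i : Fin n => (x 0 : ℝ) * θ i - (x i.succ : ℝ)‖ ≤
        ‖fun i : Fin (n + 1) => (x i : ℝ)‖ ^ (-ω)}.Infinite) :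
    {y : Fin (n + 1) → ℤ |
      |(y 0 : ℝ) + ∑ i : Fin n, (y i.succ : ℝ) * θ i| ≤
        ‖fun i : Fin (n + 1) => (y i : ℝ)‖ ^ (-ω'')}.Infinite := by
  have hnR : (1:ℝ) ≤ (n:ℝ) := by exact_mod_cast hn
  have hnpos : (0:ℝ) < (n:ℝ) := by linarith
  set C₁ : ℝ := ‖θ‖ + 1 with hC₁
  have hC₁1 : 1 ≤ C₁ := by rw [hC₁]; linarith [norm_nonneg θ]
  set C₂ : ℝ := 12 * ((n:ℝ) + 1) with hC₂
  have hC₂1 : 1 ≤ C₂ := by rw [hC₂]; nlinarith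
  set C₃ : ℝ := (n:ℝ) * C₁ * C₂ with hC₃
  have hC₃pos : 0 < C₃ := by rw [hC₃]; exact mul_pos (mul_pos hnpos (lt_of_lt_of_le one_pos hC₁1)) (lt_of_lt_of_le one_pos hC₂1)
  set s : ℝ := ω + 1 - 1/(n:ℝ) with hs
  have hsval : s * (n:ℝ) = (n:ℝ) * ω + (n:ℝ) - 1 := by
    rw [hs]; field_simp
  have hω''n : ω''/(n:ℝ) < s := by
    rw [div_lt_iff₀ hnpos]
    linarith [hsval]
  have hspos : 0 < s := lt_trans (div_pos hω''0 hnpos) hω''n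
  set d : ℝ := s - ω''/(n:ℝ) with hd
  have hdpos : 0 < d := by rw [hd]; linarith
  apply infinite_of_small (fun y : Fin (n+1) → ℤ => (y 0 : ℝ) + ∑ i : Fin n, (y i.succ : ℝ) * θ i)
  intro ε hε
  set X₀ : ℝ := max 2 (max ((C₃ * C₂ ^ ω'') ^ ((1:ℝ)/d)) ((2 * C₃ / ε) ^ ((1:ℝ)/s))) with hX₀
  obtain ⟨x, hxS, hxX⟩ := exists_large_of_infinite hS X₀
  set X : ℝ := ‖fun i : Fin (n+1) => (x i : ℝ)‖ with hXdef
  have hX2 : 2 ≤ X := le_of_lt (lt_of_le_of_lt (le_max_left _ _) hxX)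
  have hX1 : 1 ≤ X := by linarith
  have hX0 : 0 < X := by linarith
  have hWd : (C₃ * C₂ ^ ω'') ^ ((1:ℝ)/d) ≤ X :=
    le_of_lt (lt_of_le_of_lt (le_trans (le_max_left _ _) (le_max_right _ _)) hxX)
  have hWs : (2 * C₃ / ε) ^ ((1:ℝ)/s) ≤ X :=
    le_of_lt (lt_of_le_of_lt (le_trans (le_max_right _ _) (le_max_right _ _)) hxX)
  have hcond : ‖fun i : Fin n => (x 0 : ℝ) * θ i - (x i.succ : ℝ)‖ ≤ X ^ (-ω) := hxS
  have hco : ∀ i : Fin n, |(x 0 : ℝ) * θ i - (x i.succ : ℝ)| ≤ X ^ (-ω) := by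
    intro i
    refine le_trans ?_ hcond
    rw [← Real.norm_eq_abs]
    exact norm_le_pi_norm (fun i : Fin n => (x 0 : ℝ) * θ i - (x i.succ : ℝ)) i
  have hXw1 : X ^ (-ω) ≤ 1 := Real.rpow_le_one_of_one_le_of_nonpos hX1 (neg_nonpos.mpr hω)
  have hq1 : (1:ℝ) ≤ |(x 0 : ℝ)| := by
    rcases eq_or_ne (x 0) 0 with h0 | h0
    · exfalso
      have hb : ∀ i : Fin (n+1), ‖(x i : ℝ)‖ ≤ 1 := by
        intro i
        rw [Real.norm_eq_abs]
        refine Fin.cases ?_ ?_ i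
        · rw [h0]; norm_num
        · intro j
          have := hco j
          rw [h0] at this
          simp only [Int.cast_zero, zero_mul, zero_sub, abs_neg] at this
          exact le_trans this hXw1
      have : X ≤ 1 := (pi_norm_le_iff_of_nonneg zero_le_one).mpr hb
      linarith
    · have : (1:ℤ) ≤ |x 0| := Int.one_le_abs h0
      have h2 : ((1:ℤ):ℝ) ≤ ((|x 0| : ℤ) : ℝ) := by exact_mod_cast this
      push_cast at h2
      linarith
  have hq0 : (0:ℝ) < |(x 0 : ℝ)| := lt_of_lt_of_le one_pos hq1
  have hXq : X ≤ C₁ * |(x 0 : ℝ)| := by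
    apply (pi_norm_le_iff_of_nonneg (by positivity)).mpr
    intro i
    rw [Real.norm_eq_abs]
    refine Fin.cases ?_ ?_ i
    · have hm := mul_le_mul_of_nonneg_right hC₁1 (abs_nonneg ((x 0 : ℝ)))
      rw [one_mul] at hm
      exact hm
    · intro j
      have h1 := hco j
      have h2 : |(x j.succ : ℝ)| - |(x 0 : ℝ) * θ j| ≤ |(x 0 : ℝ) * θ j - (x j.succ : ℝ)| := by
        rw [abs_sub_comm]
        exact abs_sub_abs_le_abs_sub _ _
      have h3 : |(x 0 : ℝ) * θ j| ≤ |(x 0 : ℝ)| * ‖θ‖ := by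
        rw [abs_mul]
        have hth : |θ j| ≤ ‖θ‖ := by
          rw [← Real.norm_eq_abs]; exact norm_le_pi_norm θ j
        exact mul_le_mul_of_nonneg_left hth (abs_nonneg _)
      have : |(x j.succ : ℝ)| ≤ |(x 0 : ℝ)| * ‖θ‖ + 1 := by linarith
      rw [hC₁]
      have hg : (‖θ‖ + 1) * |(x 0 : ℝ)| = |(x 0 : ℝ)| * ‖θ‖ + |(x 0 : ℝ)| := by ring
      linarith
  have hxXb : ∀ i, |(x i : ℝ)| ≤ X := by
    intro i
    rw [← Real.norm_eq_abs]
    exact norm_le_pi_norm (fun i : Fin (n+1) => (x i : ℝ)) i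
  -- construct y via Siegel's lemma
  set a : ℝ := (6 * ((n:ℝ) + 1) * X) ^ ((1:ℝ)/(n:ℝ)) with ha
  have harg1 : (1:ℝ) ≤ 6 * ((n:ℝ) + 1) * X := by nlinarith [hnR, hX1]
  have harg0 : (0:ℝ) ≤ 6 * ((n:ℝ) + 1) * X := by linarith
  have ha1 : 1 ≤ a := by
    rw [ha]
    calc (1:ℝ) = (1:ℝ) ^ ((1:ℝ)/(n:ℝ)) := (Real.one_rpow _).symm
      _ ≤ (6 * ((n:ℝ) + 1) * X) ^ ((1:ℝ)/(n:ℝ)) :=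
          Real.rpow_le_rpow zero_le_one harg1 (by positivity)
  set B : ℕ := ⌈a⌉₊ with hB
  have haB : a ≤ (B:ℝ) := Nat.le_ceil a
  have han : a ^ n = 6 * ((n:ℝ) + 1) * X := by
    rw [ha, ← Real.rpow_natCast ((6 * ((n:ℝ) + 1) * X) ^ ((1:ℝ)/(n:ℝ))) n,
      ← Real.rpow_mul harg0]
    rw [show (1:ℝ)/(n:ℝ) * (n:ℕ) = 1 by field_simp]
    exact Real.rpow_one _
  have hB6 : 6 * ((n:ℕ) + 1 : ℝ) * X ≤ (B:ℝ) ^ n := by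
    push_cast
    calc 6 * ((n:ℝ) + 1) * X = a ^ n := han.symm
      _ ≤ (B:ℝ) ^ n := pow_le_pow_left₀ (by linarith) haB n
  have hXn1 : 1 ≤ X ^ ((1:ℝ)/(n:ℝ)) := by
    calc (1:ℝ) = (1:ℝ) ^ ((1:ℝ)/(n:ℝ)) := (Real.one_rpow _).symm
      _ ≤ X ^ ((1:ℝ)/(n:ℝ)) := Real.rpow_le_rpow zero_le_one hX1 (by positivity)
  have hBle : (B:ℝ) ≤ C₂ * X ^ ((1:ℝ)/(n:ℝ)) := by
    have h1 : (B:ℝ) < a + 1 := Nat.ceil_lt_add_one (by linarith)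
    have h2 : a ≤ 6 * ((n:ℝ) + 1) * X ^ ((1:ℝ)/(n:ℝ)) := by
      rw [ha, Real.mul_rpow (by positivity) (by linarith : (0:ℝ) ≤ X)]
      have h3 : (6 * ((n:ℝ) + 1)) ^ ((1:ℝ)/(n:ℝ)) ≤ 6 * ((n:ℝ) + 1) := by
        calc (6 * ((n:ℝ) + 1)) ^ ((1:ℝ)/(n:ℝ)) ≤ (6 * ((n:ℝ) + 1)) ^ (1:ℝ) :=
            Real.rpow_le_rpow_of_exponent_le (by nlinarith) (by rw [div_le_one hnpos]; linarith)
          _ = 6 * ((n:ℝ) + 1) := Real.rpow_one _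
      have h4 : (0:ℝ) ≤ X ^ ((1:ℝ)/(n:ℝ)) := by positivity
      exact mul_le_mul_of_nonneg_right h3 h4
    calc (B:ℝ) ≤ a + 1 := h1.le
      _ ≤ 2 * a := by linarith
      _ ≤ 2 * (6 * ((n:ℝ) + 1) * X ^ ((1:ℝ)/(n:ℝ))) := by linarith
      _ = C₂ * X ^ ((1:ℝ)/(n:ℝ)) := by rw [hC₂]; ring
  obtain ⟨y, hy0, hdot, hyB⟩ := siegel_aux n hn x X hX1 hxXb B hB6
  have hLy0 : (y 0 : ℝ) + ∑ i : Fin n, (y i.succ : ℝ) * θ i ≠ 0 := linform_ne_zero hθ hy0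
  set Ly : ℝ := (y 0 : ℝ) + ∑ i : Fin n, (y i.succ : ℝ) * θ i with hLydef
  set Y : ℝ := ‖fun i : Fin (n+1) => (y i : ℝ)‖ with hYdef
  have hY1 : 1 ≤ Y := one_le_norm_intVec hy0
  have hYpos : 0 < Y := by linarith
  have hYB : Y ≤ (B:ℝ) := by
    apply (pi_norm_le_iff_of_nonneg (by positivity)).mpr
    intro i
    rw [Real.norm_eq_abs]
    exact hyB i
  have hYZ : Y ≤ C₂ * X ^ ((1:ℝ)/(n:ℝ)) := le_trans hYB hBle
  -- key identity
  have hdotR : (x 0 : ℝ) * (y 0 : ℝ) + ∑ i : Fin n, (x i.succ : ℝ) * (y i.succ : ℝ) = 0 := by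
    have h := congrArg (fun z : ℤ => (z:ℝ)) hdot
    push_cast at h
    rw [Fin.sum_univ_succ] at h
    exact h
  have key : (x 0 : ℝ) * Ly = ∑ i : Fin n, (y i.succ : ℝ) * ((x 0 : ℝ) * θ i - (x i.succ : ℝ)) := by
    have expand : ∑ i : Fin n, (y i.succ : ℝ) * ((x 0 : ℝ) * θ i - (x i.succ : ℝ))
        = (x 0 : ℝ) * (∑ i : Fin n, (y i.succ : ℝ) * θ i)
          - ∑ i : Fin n, (x i.succ : ℝ) * (y i.succ : ℝ) := by
      rw [Finset.mul_sum, ← Finset.sum_sub_distrib]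
      exact Finset.sum_congr rfl (fun i _ => by ring)
    rw [hLydef, expand]
    linear_combination hdotR
  have h5 : |(x 0 : ℝ)| * |Ly| ≤ (n:ℝ) * (B:ℝ) * X ^ (-ω) := by
    rw [← abs_mul, key]
    calc |∑ i : Fin n, (y i.succ : ℝ) * ((x 0 : ℝ) * θ i - (x i.succ : ℝ))|
        ≤ ∑ i : Fin n, |(y i.succ : ℝ) * ((x 0 : ℝ) * θ i - (x i.succ : ℝ))| :=
          Finset.abs_sum_le_sum_abs _ _
      _ ≤ ∑ _i : Fin n, (B:ℝ) * X ^ (-ω) := by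
          refine Finset.sum_le_sum (fun i _ => ?_)
          rw [abs_mul]
          exact mul_le_mul (hyB i.succ) (hco i) (abs_nonneg _) (by positivity)
      _ = (n:ℝ) * ((B:ℝ) * X ^ (-ω)) := by
          rw [Finset.sum_const, Finset.card_univ, Fintype.card_fin, nsmul_eq_mul]
      _ = (n:ℝ) * (B:ℝ) * X ^ (-ω) := by ring
  have hmul : X * |Ly| ≤ C₃ * X ^ ((1:ℝ)/(n:ℝ) - ω) := by
    have e1 : X ^ ((1:ℝ)/(n:ℝ) - ω) = X ^ ((1:ℝ)/(n:ℝ)) * X ^ (-ω) := by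
      rw [show (1:ℝ)/(n:ℝ) - ω = (1:ℝ)/(n:ℝ) + (-ω) by ring, Real.rpow_add hX0]
    have c1 : X * |Ly| ≤ (C₁ * |(x 0 : ℝ)|) * |Ly| :=
      mul_le_mul_of_nonneg_right hXq (abs_nonneg _)
    have c2 : (C₁ * |(x 0 : ℝ)|) * |Ly| = C₁ * (|(x 0 : ℝ)| * |Ly|) := by ring
    have c3 : C₁ * (|(x 0 : ℝ)| * |Ly|) ≤ C₁ * ((n:ℝ) * (B:ℝ) * X ^ (-ω)) :=
      mul_le_mul_of_nonneg_left h5 (by linarith)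
    have c4 : C₁ * ((n:ℝ) * (B:ℝ) * X ^ (-ω))
        ≤ C₁ * ((n:ℝ) * (C₂ * X ^ ((1:ℝ)/(n:ℝ))) * X ^ (-ω)) := by
      have hr : (0:ℝ) ≤ X ^ (-ω) := by positivity
      refine mul_le_mul_of_nonneg_left ?_ (by linarith)
      refine mul_le_mul_of_nonneg_right ?_ hr
      exact mul_le_mul_of_nonneg_left hBle (by linarith)
    have c5 : C₁ * ((n:ℝ) * (C₂ * X ^ ((1:ℝ)/(n:ℝ))) * X ^ (-ω))
        = C₃ * (X ^ ((1:ℝ)/(n:ℝ)) * X ^ (-ω)) := by rw [hC₃]; ring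
    rw [e1]
    calc X * |Ly| ≤ C₁ * |(x 0 : ℝ)| * |Ly| := c1
      _ = C₁ * (|(x 0 : ℝ)| * |Ly|) := c2
      _ ≤ C₁ * ((n:ℝ) * (B:ℝ) * X ^ (-ω)) := c3
      _ ≤ C₁ * ((n:ℝ) * (C₂ * X ^ ((1:ℝ)/(n:ℝ))) * X ^ (-ω)) := c4
      _ = C₃ * (X ^ ((1:ℝ)/(n:ℝ)) * X ^ (-ω)) := c5
  have hfin1 : |Ly| ≤ C₃ * X ^ (-s) := by
    have h6 : |Ly| ≤ C₃ * X ^ ((1:ℝ)/(n:ℝ) - ω) / X := by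
      rw [le_div_iff₀ hX0, mul_comm]
      exact hmul
    have e2 : C₃ * X ^ ((1:ℝ)/(n:ℝ) - ω) / X = C₃ * X ^ (-s) := by
      rw [show ((1:ℝ)/(n:ℝ) - ω) = (-s) + 1 by rw [hs]; ring,
        Real.rpow_add hX0, Real.rpow_one]
      field_simp
    linarith [h6, e2.symm.le, e2.le]
  -- the exponent comparison
  have hC₂0 : (0:ℝ) < C₂ := by linarith
  have hXd : C₃ * C₂ ^ ω'' ≤ X ^ d := by
    have hApos : (0:ℝ) < C₃ * C₂ ^ ω'' := by positivity
    have h1 : C₃ * C₂ ^ ω'' = ((C₃ * C₂ ^ ω'') ^ ((1:ℝ)/d)) ^ d := by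
      rw [← Real.rpow_mul hApos.le, one_div_mul_cancel hdpos.ne', Real.rpow_one]
    rw [h1]
    exact Real.rpow_le_rpow (by positivity) hWd hdpos.le
  have hmain : C₃ * X ^ (-s) ≤ (C₂ * X ^ ((1:ℝ)/(n:ℝ))) ^ (-ω'') := by
    have e3 : (C₂ * X ^ ((1:ℝ)/(n:ℝ))) ^ (-ω'') = C₂ ^ (-ω'') * X ^ (-(ω''/(n:ℝ))) := by
      rw [Real.mul_rpow hC₂0.le (by positivity)]
      congr 1
      rw [← Real.rpow_mul hX0.le]
      congr 1
      ring
    rw [e3, Real.rpow_neg hC₂0.le, inv_mul_eq_div, le_div_iff₀ (by positivity)]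
    have e4 : X ^ (-(ω''/(n:ℝ))) = X ^ d * X ^ (-s) := by
      rw [← Real.rpow_add hX0]
      congr 1
      rw [hd]; ring
    rw [e4]
    calc C₃ * X ^ (-s) * C₂ ^ ω'' = (C₃ * C₂ ^ ω'') * X ^ (-s) := by ring
      _ ≤ X ^ d * X ^ (-s) :=
          mul_le_mul_of_nonneg_right hXd (Real.rpow_nonneg hX0.le _)
  have hmono : (C₂ * X ^ ((1:ℝ)/(n:ℝ))) ^ (-ω'') ≤ Y ^ (-ω'') := by
    rw [Real.rpow_neg hYpos.le, Real.rpow_neg (by positivity)]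
    exact inv_anti₀ (Real.rpow_pos_of_pos hYpos ω'')
      (Real.rpow_le_rpow hYpos.le hYZ hω''0.le)
  have hmem : |Ly| ≤ Y ^ (-ω'') := le_trans hfin1 (le_trans hmain hmono)
  have hsmall : |Ly| < ε := by
    have hApos : (0:ℝ) < 2 * C₃ / ε := by positivity
    have hXs : 2 * C₃ / ε ≤ X ^ s := by
      have h1 : 2 * C₃ / ε = ((2 * C₃ / ε) ^ ((1:ℝ)/s)) ^ s := by
        rw [← Real.rpow_mul hApos.le, one_div_mul_cancel hspos.ne', Real.rpow_one]
      rw [h1]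
      exact Real.rpow_le_rpow (by positivity) hWs hspos.le
    have h6 : X ^ (-s) ≤ ε / (2 * C₃) := by
      rw [Real.rpow_neg hX0.le]
      have h7 : (2 * C₃ / ε)⁻¹ = ε / (2 * C₃) := by
        field_simp
      rw [← h7]
      exact inv_anti₀ hApos hXs
    have h8 : C₃ * X ^ (-s) ≤ C₃ * (ε / (2 * C₃)) :=
      mul_le_mul_of_nonneg_left h6 hC₃pos.le
    have h9 : C₃ * (ε / (2 * C₃)) = ε / 2 := by field_simp
    linarith [hfin1, h8, h9]
  refine ⟨y, ?_, ?_, hsmall⟩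
  · exact hmem
  · exact abs_pos.mpr hLy0

/-- `ω_0(Θ)`: the ordinary exponent of simultaneous rational approximation to
`θ_1, …, θ_n` (Definition 1 of the paper), as an extended real number. -/
noncomputable def omegaSim (n : ℕ) (θ : Fin n → ℝ) : EReal :=
  sSup (Real.toEReal '' {ω : ℝ |
    {x : Fin (n + 1) → ℤ |
      ‖fun i : Fin n => (x 0 : ℝ) * θ i - (x i.succ : ℝ)‖ ≤
        ‖fun i : Fin (n + 1) => (x i : ℝ)‖ ^ (-ω)}.Infinite})

/-- `ω_{n-1}(Θ)`: the ordinary exponent of approximation by the linear form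
`x_0 + x_1 θ_1 + ⋯ + x_n θ_n` (Definition 1 of the paper). -/
noncomputable def omegaLin (n : ℕ) (θ : Fin n → ℝ) : EReal :=
  sSup (Real.toEReal '' {ω : ℝ |
    {x : Fin (n + 1) → ℤ |
      |(x 0 : ℝ) + ∑ i : Fin n, (x i.succ : ℝ) * θ i| ≤
        ‖fun i : Fin (n + 1) => (x i : ℝ)‖ ^ (-ω)}.Infinite})

/-- `ω̂_0(Θ)`: the uniform exponent of simultaneous rational approximation
(Definition 3 of the paper). -/
noncomputable def omegaSimHat (n : ℕ) (θ : Fin n → ℝ) : EReal :=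
  sSup (Real.toEReal '' {ω : ℝ | ∃ X₀ : ℝ, ∀ X : ℝ, X₀ ≤ X →
    ∃ x : Fin (n + 1) → ℤ, x ≠ 0 ∧ (∀ i, |(x i : ℝ)| ≤ X) ∧
      ‖fun i : Fin n => (x 0 : ℝ) * θ i - (x i.succ : ℝ)‖ ≤ X ^ (-ω)})

/-- `ω̂_{n-1}(Θ)`: the uniform exponent of approximation by the linear form
(Definition 3 of the paper). -/
noncomputable def omegaLinHat (n : ℕ) (θ : Fin n → ℝ) : EReal :=
  sSup (Real.toEReal '' {ω : ℝ | ∃ X₀ : ℝ, ∀ X : ℝ, X₀ ≤ X →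
    ∃ x : Fin (n + 1) → ℤ, x ≠ 0 ∧ (∀ i, |(x i : ℝ)| ≤ X) ∧
      |(x 0 : ℝ) + ∑ i : Fin n, (x i.succ : ℝ) * θ i| ≤ X ^ (-ω)})

/-- Khintchine's Transference Principle, upper bound:
`ω_0(Θ) ≤ (ω_{n-1}(Θ) - n + 1)/n` (no restriction when `ω_{n-1}(Θ) = +∞`). -/
theorem khintchine_transference_upper (n : ℕ) (hn : 1 ≤ n) (θ : Fin n → ℝ)
    (hθ : LinearIndependent ℚ (Fin.cons (1 : ℝ) θ : Fin (n + 1) → ℝ)) :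
    ∀ w : ℝ, omegaLin n θ = (w : EReal) →
      omegaSim n θ ≤ (((w - (n : ℝ) + 1) / (n : ℝ) : ℝ) : EReal) := by
  intro w hw
  have hnR : (1:ℝ) ≤ (n:ℝ) := by exact_mod_cast hn
  have hnpos : (0:ℝ) < (n:ℝ) := by linarith
  have hw0 : (0:ℝ) ≤ w := by
    have h0 : ((0:ℝ) : EReal) ≤ omegaLin n θ := by
      rw [omegaLin]
      exact le_sSup ⟨0, zero_mem_lin hn θ, rfl⟩
    rw [hw] at h0
    exact EReal.coe_le_coe_iff.mp h0
  rw [omegaSim]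
  apply sSup_le
  rintro e ⟨ω, hωmem, rfl⟩
  simp only [Set.mem_setOf_eq] at hωmem
  rw [EReal.coe_le_coe_iff]
  by_contra hcon
  push_neg at hcon
  set ω₀ : ℝ := max ω 0 with hω₀
  have hω₀mem : {x : Fin (n + 1) → ℤ |
      ‖fun i : Fin n => (x 0 : ℝ) * θ i - (x i.succ : ℝ)‖ ≤
        ‖fun i : Fin (n + 1) => (x i : ℝ)‖ ^ (-ω₀)}.Infinite := by
    rcases le_or_gt 0 ω with h | h
    · rw [hω₀, max_eq_left h]; exact hωmem
    · rw [hω₀, max_eq_right h.le]; exact zero_mem_sim θ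
  have hω₀0 : 0 ≤ ω₀ := le_max_right _ _
  have ht : (w - (n:ℝ) + 1) / (n:ℝ) < ω₀ := lt_of_lt_of_le hcon (le_max_left _ _)
  have hwlt : w < (n:ℝ) * ω₀ + (n:ℝ) - 1 := by
    have := (div_lt_iff₀ hnpos).mp ht
    nlinarith
  set ω'' : ℝ := (w + ((n:ℝ) * ω₀ + (n:ℝ) - 1)) / 2 with hω''def
  have h1 : w < ω'' := by rw [hω''def]; linarith
  have h2 : ω'' < (n:ℝ) * ω₀ + (n:ℝ) - 1 := by rw [hω''def]; linarith
  have h3 : 0 < ω'' := lt_of_le_of_lt hw0 h1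
  have hstep := transfer_step n hn θ hθ ω₀ ω'' hω₀0 h3 h2 hω₀mem
  have hle : ((ω'':ℝ):EReal) ≤ omegaLin n θ := by
    rw [omegaLin]
    exact le_sSup ⟨ω'', hstep, rfl⟩
  rw [hw] at hle
  have hfin : ω'' ≤ w := EReal.coe_le_coe_iff.mp hle
  linarith
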